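/- arXiv:2507.12780 — 2 statements merged into one kernel-verified Lean document; each statement's English description precedes it below -/
import Mathlib

section
/- If the landmark rows F_I span the row space of F, then the Nyström approximation is exact: C W† Cᵀ = F Fᵀ. -/
open Matrix

/-- `Wd` is the Moore–Penrose pseudoinverse of `W` (the four Penrose conditions). -/
def IsMoorePenrose {m : ℕ} (W Wd : Matrix (Fin m) (Fin m) ℝ) : Prop :=
  W * Wd * W = W ∧ Wd * W * Wd = Wd ∧ (W * Wd)ᵀ = W * Wd ∧ (Wd * W)ᵀ = Wd * W

/-- if the landmark rows `F_I` span the row space of `F`, the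
Nyström approximation is exact: `C W† Cᵀ = F Fᵀ`. -/
theorem nystrom_exact_of_row_space_eq
    {n d m : ℕ} (F : Matrix (Fin n) (Fin d) ℝ)
    (I : Fin m ↪ Fin n)
    (FI : Matrix (Fin m) (Fin d) ℝ) (hFI : FI = F.submatrix I id)
    (hspan : Submodule.span ℝ (Set.range fun i : Fin m => FI i) =
             Submodule.span ℝ (Set.range fun i : Fin n => F i))
    (Cmat : Matrix (Fin n) (Fin m) ℝ) (hC : Cmat = F * FIᵀ)
    (W : Matrix (Fin m) (Fin m) ℝ) (hW : W = FI * FIᵀ)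
    (Wd : Matrix (Fin m) (Fin m) ℝ) (hWd : IsMoorePenrose W Wd) :
    Cmat * Wd * Cmatᵀ = F * Fᵀ := by
  -- Each row of F lies in the span of the rows of FI.
  have hmem : ∀ i : Fin n, F i ∈ Submodule.span ℝ (Set.range fun i : Fin m => FI i) := by
    intro i
    rw [hspan]
    exact Submodule.subset_span ⟨i, rfl⟩
  have hA : ∀ i : Fin n, ∃ c : Fin m → ℝ, ∑ k, c k • FI k = F i := by
    intro i
    exact (Submodule.mem_span_range_iff_exists_fun ℝ).1 (hmem i)
  choose A hAspec using hA
  have hF : F = Matrix.of A * FI := by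
    ext i j
    have := congrFun (hAspec i) j
    simpa [Matrix.mul_apply, Finset.sum_apply] using this.symm
  have hCA : Cmat = Matrix.of A * W := by
    rw [hC, hW, hF, Matrix.mul_assoc]
  have hWT : Wᵀ = W := by
    rw [hW, Matrix.transpose_mul, Matrix.transpose_transpose]
  have hCT : Cmatᵀ = W * (Matrix.of A)ᵀ := by
    rw [hCA, Matrix.transpose_mul, hWT]
  calc Cmat * Wd * Cmatᵀ
      = Matrix.of A * (W * Wd * W) * (Matrix.of A)ᵀ := by
        rw [hCT, hCA]; simp only [Matrix.mul_assoc]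
    _ = Matrix.of A * W * (Matrix.of A)ᵀ := by rw [hWd.1]
    _ = F * Fᵀ := by
        rw [hW, hF, Matrix.transpose_mul]
        simp only [Matrix.mul_assoc]
end

section
/- For positive semidefinite matrices, the truncated nuclear norm ‖K‖_r = ∑_{i > r} λ̂_i(K) admits the variational characterization ‖K‖_r = min_{U ∈ ℝ^{n×r}, UᵀU = I_r} [tr(K) − tr(Uᵀ K U)]. -/
open Matrix

private lemma sum_ite_lt_aux {n r : ℕ} (hr : r ≤ n) (f : ℕ → ℝ) :
    ∑ i : Fin n, (if (i : ℕ) < r then f (i : ℕ) else 0) = ∑ k ∈ Finset.range r, f k := by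
  rw [Fin.sum_univ_eq_sum_range (fun k => if k < r then f k else 0)]
  rw [← Finset.sum_subset (Finset.range_subset_range.2 hr)
    (fun k _ hk => if_neg (fun h => hk (Finset.mem_range.2 h)))]
  exact Finset.sum_congr rfl fun k hk => if_pos (Finset.mem_range.1 hk)

private lemma key_ineq {n r : ℕ} (hr : r ≤ n) (lam d : Fin n → ℝ)
    (hsort : ∀ i j : Fin n, i ≤ j → lam j ≤ lam i) (hnn : ∀ i, 0 ≤ lam i)
    (hd0 : ∀ i, 0 ≤ d i) (hd1 : ∀ i, d i ≤ 1)
    (hsum : ∑ i, d i = (n : ℝ) - r) :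
    (∑ i : Fin n, if r ≤ (i : ℕ) then lam i else 0) ≤ ∑ i, lam i * d i := by
  set t : ℝ := if h : r < n then lam ⟨r, h⟩ else 0 with ht
  have htle : ∀ i : Fin n, r ≤ (i : ℕ) → lam i ≤ t := by
    intro i hi
    have hrn : r < n := lt_of_le_of_lt hi i.2
    rw [ht, dif_pos hrn]
    exact hsort ⟨r, hrn⟩ i hi
  have hle : ∀ i : Fin n, (i : ℕ) < r → t ≤ lam i := by
    intro i hi
    rw [ht]
    split
    · next h => exact hsort i ⟨r, h⟩ (le_of_lt hi)
    · exact hnn i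
  -- counting lemma
  have hcount : ∑ i : Fin n, (if (i : ℕ) < r then (1 : ℝ) else 0) = (r : ℝ) := by
    rw [sum_ite_lt_aux hr (fun _ => (1 : ℝ))]
    simp
  have hcount2 : ∑ i : Fin n, (if r ≤ (i : ℕ) then (1 : ℝ) else 0) = (n : ℝ) - r := by
    have : ∀ i : Fin n, (if r ≤ (i : ℕ) then (1 : ℝ) else 0)
        = 1 - (if (i : ℕ) < r then (1 : ℝ) else 0) := by
      intro i
      by_cases h : r ≤ (i : ℕ)
      · simp [h, Nat.not_lt.2 h]
      · simp [h, Nat.lt_of_not_le h]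
    rw [Finset.sum_congr rfl fun i _ => this i, Finset.sum_sub_distrib, hcount]
    simp
  have hzero : ∑ i : Fin n, (t * d i - (if r ≤ (i : ℕ) then t else 0)) = 0 := by
    rw [Finset.sum_sub_distrib, ← Finset.mul_sum, hsum]
    have : ∀ i : Fin n, (if r ≤ (i : ℕ) then t else 0)
        = t * (if r ≤ (i : ℕ) then (1 : ℝ) else 0) := by
      intro i; split <;> ring
    rw [Finset.sum_congr rfl fun i _ => this i, ← Finset.mul_sum, hcount2]
    ring
  have hpt : ∀ i : Fin n,
      (if r ≤ (i : ℕ) then lam i else 0) + (t * d i - (if r ≤ (i : ℕ) then t else 0))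
        ≤ lam i * d i := by
    intro i
    by_cases h : r ≤ (i : ℕ)
    · have h1 := htle i h
      have h2 := hd1 i
      simp only [if_pos h]
      nlinarith
    · have h1 := hle i (Nat.lt_of_not_le h)
      have h2 := hd0 i
      simp only [if_neg h]
      nlinarith
  calc (∑ i : Fin n, if r ≤ (i : ℕ) then lam i else 0)
      = ∑ i : Fin n, ((if r ≤ (i : ℕ) then lam i else 0)
          + (t * d i - (if r ≤ (i : ℕ) then t else 0))) := by
        rw [Finset.sum_add_distrib, hzero, add_zero]
    _ ≤ ∑ i, lam i * d i := Finset.sum_le_sum fun i _ => hpt i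

/-- variational characterization of the truncated nuclear norm:
`‖K‖_r = ∑_{i>r} λ̂_i` is the minimum of `tr(K) − tr(Uᵀ K U)` over all `U ∈ ℝ^{n×r}`
with orthonormal columns. -/
theorem tnn_variational
    {n r : ℕ} (hr : r ≤ n)
    (K : Matrix (Fin n) (Fin n) ℝ) (hK : K.PosSemidef)
    (lam : Fin n → ℝ)
    (hsort : ∀ i j : Fin n, i ≤ j → lam j ≤ lam i)
    (e : Fin n ≃ Fin n) (hlam : ∀ i, lam i = hK.1.eigenvalues (e i)) :
    IsLeast
      {x : ℝ | ∃ U : Matrix (Fin n) (Fin r) ℝ,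
        Uᵀ * U = 1 ∧ x = K.trace - (Uᵀ * K * U).trace}
      (∑ i : Fin n, if r ≤ (i : ℕ) then lam i else 0) := by
  classical
  set V : Matrix (Fin n) (Fin n) ℝ := (hK.1.eigenvectorUnitary : Matrix (Fin n) (Fin n) ℝ)
    with hVdef
  have hstar : star V = Vᵀ := by
    ext i j; simp [Matrix.star_apply]
  have hVtV : Vᵀ * V = 1 := by
    rw [← hstar]; exact Matrix.mem_unitaryGroup_iff'.mp hK.1.eigenvectorUnitary.2
  have hVVt : V * Vᵀ = 1 := by
    rw [← hstar]; exact Matrix.mem_unitaryGroup_iff.mp hK.1.eigenvectorUnitary.2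
  set lam0 : Fin n → ℝ := hK.1.eigenvalues with hlam0
  have hKdiag : Vᵀ * K * V = Matrix.diagonal lam0 := by
    have h := hK.1.conjStarAlgAut_star_eigenvectorUnitary
    simp only [Unitary.conjStarAlgAut_star_apply, Unitary.coe_star, star_star] at h
    rw [hstar] at h
    simpa [RCLike.ofReal_real_eq_id] using h
  have hspec : K = V * Matrix.diagonal lam0 * Vᵀ := by
    have h := hK.1.spectral_theorem
    simp only [Unitary.conjStarAlgAut_apply, Unitary.coe_star] at h
    rw [hstar] at h
    simpa [RCLike.ofReal_real_eq_id] using h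
  have htraceK : K.trace = ∑ i, lam0 i := by
    conv_lhs => rw [hspec]
    rw [Matrix.trace_mul_comm (V * Matrix.diagonal lam0) Vᵀ, ← Matrix.mul_assoc, hVtV,
      Matrix.one_mul, Matrix.trace_diagonal]
  have hnn0 : ∀ i, 0 ≤ lam0 i := fun i => hK.eigenvalues_nonneg i
  have htraceK' : K.trace = ∑ i, lam i := by
    rw [htraceK, ← Equiv.sum_comp e lam0]
    exact Finset.sum_congr rfl fun i _ => (hlam i).symm
  -- auxiliary extension of lam to ℕ
  set f : ℕ → ℝ := fun k => if h : k < n then lam ⟨k, h⟩ else 0 with hf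
  have hfl : ∀ i : Fin n, lam i = f (i : ℕ) := by
    intro i; simp [hf, i.2]
  constructor
  · -- membership
    set g : Fin r → Fin n := fun j => e (Fin.castLE hr j) with hg
    have hginj : Function.Injective g := fun j k hjk => by
      have := e.injective hjk
      exact Fin.castLE_injective hr this
    refine ⟨Matrix.of (fun a j => V a (g j)), ?_, ?_⟩
    · ext j k
      have h2 : (Vᵀ * V) (g j) (g k) = (1 : Matrix (Fin n) (Fin n) ℝ) (g j) (g k) := by
        rw [hVtV]
      simp only [Matrix.mul_apply, Matrix.transpose_apply] at h2 ⊢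
      simp only [Matrix.of_apply]
      rw [h2, Matrix.one_apply, Matrix.one_apply]
      by_cases hjk : j = k
      · simp [hjk]
      · have hne : g j ≠ g k := fun h => hjk (hginj h)
        simp [hjk, hne]
    · -- value
      have htr : (((Matrix.of (fun a j => V a (g j)))ᵀ) * K * (Matrix.of (fun a j => V a (g j)))).trace
          = ∑ j : Fin r, lam0 (g j) := by
        rw [Matrix.trace]
        apply Finset.sum_congr rfl
        intro j _
        have hent : (((Matrix.of (fun a j => V a (g j)))ᵀ) * K * (Matrix.of (fun a j => V a (g j)))) j j
            = (Vᵀ * K * V) (g j) (g j) := by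
          simp [Matrix.mul_apply, Matrix.transpose_apply]
        rw [Matrix.diag_apply, hent, hKdiag, Matrix.diagonal_apply_eq]
      have hsumr : ∑ j : Fin r, lam0 (g j) = ∑ k ∈ Finset.range r, f k := by
        rw [show ∑ j : Fin r, lam0 (g j) = ∑ j : Fin r, f (j : ℕ) from
          Finset.sum_congr rfl fun j _ => by
            rw [hg, ← hlam (Fin.castLE hr j), hfl (Fin.castLE hr j)]; rfl]
        exact Fin.sum_univ_eq_sum_range f r
      have hsplit : ∑ i : Fin n, lam i
          = (∑ i : Fin n, if r ≤ (i : ℕ) then lam i else 0)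
            + ∑ k ∈ Finset.range r, f k := by
        rw [← sum_ite_lt_aux hr f, ← Finset.sum_add_distrib]
        apply Finset.sum_congr rfl
        intro i _
        by_cases h : r ≤ (i : ℕ)
        · simp [h, Nat.not_lt.2 h]
        · simp [h, Nat.lt_of_not_le h, hfl i]
      rw [htr, hsumr, htraceK', hsplit]
      ring
  · -- lower bound
    rintro x ⟨U, hU, rfl⟩
    set W : Matrix (Fin n) (Fin r) ℝ := Vᵀ * U with hW
    have hWt : Wᵀ = Uᵀ * V := by
      rw [hW, Matrix.transpose_mul, Matrix.transpose_transpose]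
    have hWtW : Wᵀ * W = 1 := by
      rw [hWt, hW, Matrix.mul_assoc, ← Matrix.mul_assoc V, hVVt, Matrix.one_mul, hU]
    set P : Matrix (Fin n) (Fin n) ℝ := W * Wᵀ with hP
    have hPt : Pᵀ = P := by
      rw [hP, Matrix.transpose_mul, Matrix.transpose_transpose]
    have hPsymm : ∀ i k, P k i = P i k := by
      intro i k
      have := congrFun (congrFun hPt i) k
      rwa [Matrix.transpose_apply] at this
    have hPP : P * P = P := by
      rw [hP, Matrix.mul_assoc, ← Matrix.mul_assoc Wᵀ, hWtW, Matrix.one_mul]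
    set c : Fin n → ℝ := fun i => P i i with hc
    have hc0 : ∀ i, 0 ≤ c i := by
      intro i
      rw [hc]
      simp only [hP, Matrix.mul_apply]
      apply Finset.sum_nonneg
      intro j _
      rw [Matrix.transpose_apply]
      exact mul_self_nonneg _
    have hc1 : ∀ i, c i ≤ 1 := by
      intro i
      have h1 : c i = ∑ k, P i k * P k i := by
        show P i i = _
        rw [show P i i = (P * P) i i from by rw [hPP], Matrix.mul_apply]
      have h2 : P i i * P i i ≤ ∑ k, P i k * P k i := by
        apply Finset.single_le_sum (f := fun k => P i k * P k i) _ (Finset.mem_univ i)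
        intro k _
        show (0 : ℝ) ≤ P i k * P k i
        rw [hPsymm i k]
        exact mul_self_nonneg _
      have h3 := hc0 i
      rw [hc] at h3 ⊢
      nlinarith
    have hsumc : ∑ i, c i = (r : ℝ) := by
      have h1 : ∑ i, c i = P.trace := by
        simp [Matrix.trace, Matrix.diag, hc]
      rw [h1, hP, Matrix.trace_mul_comm, hWtW, Matrix.trace_one]
      simp
    have htrU : (Uᵀ * K * U).trace = ∑ i, lam0 i * c i := by
      have h1 : Uᵀ * K * U = Wᵀ * Matrix.diagonal lam0 * W := by
        rw [hWt, hW]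
        conv_lhs => rw [hspec]
        simp only [Matrix.mul_assoc]
      rw [h1, Matrix.trace_mul_cycle]
      simp only [← hP]
      simp [Matrix.trace, Matrix.diag, Matrix.mul_diagonal, hc, mul_comm]
    have hdiff : K.trace - (Uᵀ * K * U).trace = ∑ i, lam i * (1 - c (e i)) := by
      rw [htraceK, htrU, ← Equiv.sum_comp e lam0, ← Equiv.sum_comp e (fun i => lam0 i * c i),
        ← Finset.sum_sub_distrib]
      apply Finset.sum_congr rfl
      intro i _
      rw [← hlam i]
      ring
    rw [hdiff]
    apply key_ineq hr lam (fun i => 1 - c (e i)) hsort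
    · intro i; rw [hlam i]; exact hnn0 _
    · intro i; have := hc1 (e i); linarith
    · intro i; have := hc0 (e i); linarith
    · rw [Finset.sum_sub_distrib, Equiv.sum_comp e c, hsumc]
      simp
end
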